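/- Along any differentiable path of unit-norm perturbations the modulus of the eigenvector product is differentiable and satisfies d/dt |y(t)^H x(t)| = ε |y(t)^H x(t)| · Re⟨Ė(t), S(t)⟩, where S(t) = y(t) y(t)^H G(t)^H + G(t)^H x(t) x(t)^H. -/

import Mathlib

open Matrix

/-- Frobenius inner product `⟨A,B⟩ = trace(Aᴴ B)`. -/
noncomputable def frobInner {n : ℕ} (A B : Matrix (Fin n) (Fin n) ℂ) : ℂ :=
  (Aᴴ * B).trace

/-- `G` is a group inverse of `M`. -/
def IsGroupInverse {n : ℕ} (M G : Matrix (Fin n) (Fin n) ℂ) : Prop :=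
  M * G = G * M ∧ G * M * G = G ∧ M * G * M = M

/-- The matrix `S = y yᴴ Gᴴ + Gᴴ x xᴴ`. -/
noncomputable def Smat {n : ℕ} (x y : Fin n → ℂ) (G : Matrix (Fin n) (Fin n) ℂ) :
    Matrix (Fin n) (Fin n) ℂ :=
  vecMulVec y (star y) * Gᴴ + Gᴴ * vecMulVec x (star x)

lemma trace_vecMulVec_mul {n : ℕ} (u v : Fin n → ℂ) (M : Matrix (Fin n) (Fin n) ℂ) :
    (vecMulVec u v * M).trace = v ⬝ᵥ (M *ᵥ u) := by
  simp only [Matrix.trace, Matrix.diag, Matrix.mul_apply, vecMulVec_apply, Matrix.mulVec,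
    dotProduct, Finset.mul_sum]
  rw [Finset.sum_comm]
  exact Finset.sum_congr rfl fun i _ => Finset.sum_congr rfl fun k _ => by ring

lemma vecMulVec_conjT {n : ℕ} (u v : Fin n → ℂ) :
    (vecMulVec u (star v))ᴴ = vecMulVec v (star u) := by
  ext i j
  simp [vecMulVec_apply, conjTranspose_apply, mul_comm]

lemma key {n : ℕ} (X Y : Fin n → ℂ) (g Ep : Matrix (Fin n) (Fin n) ℂ) :
    star X ⬝ᵥ (g *ᵥ (Ep *ᵥ X)) + star Y ⬝ᵥ ((Ep * g) *ᵥ Y)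
      = star (frobInner Ep (Smat X Y g)) := by
  rw [frobInner, ← trace_conjTranspose]
  rw [conjTranspose_mul, conjTranspose_conjTranspose]
  have hS : (Smat X Y g)ᴴ = g * vecMulVec Y (star Y) + vecMulVec X (star X) * g := by
    rw [Smat, conjTranspose_add, conjTranspose_mul, conjTranspose_mul,
      conjTranspose_conjTranspose, vecMulVec_conjT, vecMulVec_conjT]
  rw [hS, add_mul, trace_add, Matrix.mul_assoc g, trace_mul_comm,
    Matrix.mul_assoc (vecMulVec Y (star Y)), trace_vecMulVec_mul,
    Matrix.mul_assoc (vecMulVec X (star X)), trace_vecMulVec_mul, mulVec_mulVec]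
  ring

theorem stmt0 {n : ℕ} (hn : 2 ≤ n) (A : Matrix (Fin n) (Fin n) ℂ) (ε : ℝ) (hε : 0 < ε)
    (E E' : ℝ → Matrix (Fin n) (Fin n) ℂ)
    (x x' y y' : ℝ → (Fin n → ℂ))
    (lam lam' : ℝ → ℂ)
    (G G' : ℝ → Matrix (Fin n) (Fin n) ℂ)
    (hEdiff : ∀ t i j, HasDerivAt (fun s => E s i j) (E' t i j) t)
    (hxdiff : ∀ t i, HasDerivAt (fun s => x s i) (x' t i) t)
    (hydiff : ∀ t i, HasDerivAt (fun s => y s i) (y' t i) t)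
    (hlamdiff : ∀ t, HasDerivAt lam (lam' t) t)
    (hGdiff : ∀ t i j, HasDerivAt (fun s => G s i j) (G' t i j) t)
    (heig : ∀ t, (A + (ε : ℂ) • E t) *ᵥ x t = lam t • x t)
    (hleig : ∀ t, star (y t) ᵥ* (A + (ε : ℂ) • E t) = lam t • star (y t))
    (hxnorm : ∀ t, star (x t) ⬝ᵥ x t = 1)
    (hynorm : ∀ t, star (y t) ⬝ᵥ y t = 1)
    (hyx : ∀ t, star (y t) ⬝ᵥ x t ≠ 0)
    (hG : ∀ t, IsGroupInverse (A + (ε : ℂ) • E t - lam t • 1) (G t))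
    (hGx : ∀ t, G t *ᵥ x t = 0)
    (hyG : ∀ t, star (y t) ᵥ* G t = 0)
    (hx' : ∀ t, x' t =
      (star (x t) ⬝ᵥ (G t *ᵥ (((ε : ℂ) • E' t) *ᵥ x t))) • x t
        - G t *ᵥ (((ε : ℂ) • E' t) *ᵥ x t))
    (hy' : ∀ t, star (y' t) =
      (star (y t) ⬝ᵥ ((((ε : ℂ) • E' t) * G t) *ᵥ y t)) • star (y t)
        - star (y t) ᵥ* (((ε : ℂ) • E' t) * G t)) :
    ∀ t, HasDerivAt (fun s => ‖star (y s) ⬝ᵥ x s‖)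
      (ε * ‖star (y t) ⬝ᵥ x t‖ *
        (frobInner (E' t) (Smat (x t) (y t) (G t))).re) t := by
  intro t
  set u : ℝ → ℂ := fun s => star (y s) ⬝ᵥ x s with hu
  set c : ℂ := star (x t) ⬝ᵥ (G t *ᵥ (((ε : ℂ) • E' t) *ᵥ x t)) with hc
  set d : ℂ := star (y t) ⬝ᵥ ((((ε : ℂ) • E' t) * G t) *ᵥ y t) with hd
  -- derivative of u
  have hf : HasDerivAt u ((c + d) * u t) t := by
    have h1 := HasDerivAt.sum (u := (Finset.univ : Finset (Fin n)))
      (fun i _ => ((hydiff t i).star.mul (hxdiff t i)))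
    have hval : (∑ i, (star (y' t i) * x t i + star (y t i) * x' t i))
        = (c + d) * u t := by
      rw [Finset.sum_add_distrib]
      have e1 : (∑ i, star (y' t i) * x t i) = star (y' t) ⬝ᵥ x t := rfl
      have e2 : (∑ i, star (y t i) * x' t i) = star (y t) ⬝ᵥ x' t := rfl
      rw [e1, e2, hy' t, hx' t, sub_dotProduct, smul_dotProduct,
        dotProduct_sub, dotProduct_smul]
      have z1 : (star (y t) ᵥ* (((ε : ℂ) • E' t) * G t)) ⬝ᵥ x t = 0 := by
        rw [← dotProduct_mulVec, ← mulVec_mulVec, hGx t, mulVec_zero, dotProduct_zero]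
      have z2 : star (y t) ⬝ᵥ (G t *ᵥ (((ε : ℂ) • E' t) *ᵥ x t)) = 0 := by
        rw [dotProduct_mulVec, hyG t, zero_dotProduct]
      rw [z1, z2]
      simp only [smul_eq_mul, sub_zero]
      ring
    rw [← hval]
    have hu2 : u = ∑ i, ((fun s => star (y s i)) * fun s => x s i) := by
      funext s
      simp [hu, dotProduct, Finset.sum_apply]
    rw [hu2]
    exact h1
  have hune : u t ≠ 0 := hyx t
  -- the key identity
  have hkey : c + d = star (frobInner ((ε : ℂ) • E' t) (Smat (x t) (y t) (G t))) :=
    key (x t) (y t) (G t) ((ε : ℂ) • E' t)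
  have hfrob : frobInner ((ε : ℂ) • E' t) (Smat (x t) (y t) (G t))
      = (ε : ℂ) * frobInner (E' t) (Smat (x t) (y t) (G t)) := by
    rw [frobInner, frobInner, conjTranspose_smul, Matrix.smul_mul, trace_smul]
    simp [smul_eq_mul, Complex.star_def, Complex.conj_ofReal]
  have hre : (c + d).re = ε * (frobInner (E' t) (Smat (x t) (y t) (G t))).re := by
    rw [hkey, hfrob]
    simp [Complex.star_def]
  -- norm squared derivative
  have hF : HasDerivAt (fun s => ‖u s‖ ^ 2) (2 * (inner ℝ (u t) ((c + d) * u t) : ℝ)) t :=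
    hf.norm_sq
  have hne : ‖u t‖ ≠ 0 := norm_ne_zero_iff.mpr hune
  have hFne : ‖u t‖ ^ 2 ≠ 0 := pow_ne_zero 2 hne
  have hsq := hF.sqrt hFne
  have habs : (fun s => ‖star (y s) ⬝ᵥ x s‖) = fun s => Real.sqrt (‖u s‖ ^ 2) := by
    funext s
    rw [Real.sqrt_sq (norm_nonneg _)]
  rw [habs]
  convert hsq using 1
  rw [Complex.inner, Real.sqrt_sq (norm_nonneg _)]
  have hmc : (c + d) * u t * (starRingEnd ℂ) (u t) = (c + d) * ((‖u t‖ : ℂ))^2 := by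
    rw [← Complex.mul_conj']
    ring
  rw [hmc]
  have hre2 : ((c + d) * ((‖u t‖ : ℂ))^2).re = (c + d).re * ‖u t‖ ^ 2 := by
    rw [← Complex.ofReal_pow, Complex.re_mul_ofReal]
  rw [hre2, hre]
  have ha : ‖u t‖ ≠ 0 := hne
  field_simp
  ring
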